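/- For every set Σ of FAIs in Y and all A, B ∈ L^Y: ||A ⇒ B||^S_Σ = ⋁{c ∈ L : Σ ⊨^S A ⇒ c ⊗ B} = S(B, [A]^S_Σ). -/
import Mathlib


/-- A complete residuated lattice: a complete lattice with a commutative, associative
multiplication whose neutral element is the top element and which distributes over
arbitrary suprema. -/
class CompleteResiduatedLattice (L : Type*) extends CompleteLattice L, CommMonoid L where
  mul_sSup : ∀ (a : L) (s : Set L), a * sSup s = ⨆ b ∈ s, a * b
  one_eq_top : (1 : L) = ⊤

namespace FAIparam

variable {L : Type*} {Y : Type*} {X : Type*}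

/-- A fuzzy attribute implication (FAI): a pair (antecedent, consequent) of L-sets in Y. -/
abbrev FAI (L Y : Type*) := (Y → L) × (Y → L)

/-- A pair of operators on L-sets in Y. -/
abbrev OpPair (L Y : Type*) := ((Y → L) → (Y → L)) × ((Y → L) → (Y → L))

/-- S is a parameterization: every pair in S is a monotone Galois connection, the identity
pair belongs to S, and S is closed under composition ⟨f₁,g₁⟩∘⟨f₂,g₂⟩ = ⟨f₁∘f₂, g₂∘g₁⟩. -/
def IsParam [CompleteResiduatedLattice L] (S : Set (OpPair L Y)) : Prop :=
  (∀ p ∈ S, ∀ A B : Y → L, p.1 A ≤ B ↔ A ≤ p.2 B) ∧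
  (((id, id) : OpPair L Y) ∈ S) ∧
  (∀ p ∈ S, ∀ q ∈ S, ((p.1 ∘ q.1, q.2 ∘ p.2) : OpPair L Y) ∈ S)

/-- M ⊨^S A ⇒ B : for every ⟨f,g⟩ ∈ S, f(A) ⊆ M implies f(B) ⊆ M. -/
def Sat [CompleteResiduatedLattice L] (S : Set (OpPair L Y)) (M : Y → L) (φ : FAI L Y) : Prop :=
  ∀ p ∈ S, p.1 φ.1 ≤ M → p.1 φ.2 ≤ M

/-- The set Mod^S(Th) of S-models of a theory Th. -/
def ModS [CompleteResiduatedLattice L] (S : Set (OpPair L Y)) (Th : Set (FAI L Y)) :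
    Set (Y → L) :=
  {M | ∀ φ ∈ Th, Sat S M φ}

/-- Semantic entailment Th ⊨^S φ, i.e. Mod^S(Th) ⊆ Mod^S({φ}). -/
def Entails [CompleteResiduatedLattice L] (S : Set (OpPair L Y)) (Th : Set (FAI L Y))
    (φ : FAI L Y) : Prop :=
  ModS S Th ⊆ ModS S {φ}

/-- [A]^S_Th : the least S-model of Th containing A (intersection of all such models). -/
def clS [CompleteResiduatedLattice L] (S : Set (OpPair L Y)) (Th : Set (FAI L Y))
    (A : Y → L) : Y → L :=
  sInf {M | M ∈ ModS S Th ∧ A ≤ M}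

/-- S-closure operator on L^Y. -/
def IsSClosureOp [CompleteResiduatedLattice L] (S : Set (OpPair L Y))
    (c : (Y → L) → (Y → L)) : Prop :=
  (∀ A, A ≤ c A) ∧ (∀ A B, A ≤ B → c A ≤ c B) ∧
  (∀ p ∈ S, ∀ A, c (p.2 (c A)) ≤ p.2 (c A))

/-- S-closure system in ⟨L^Y, ⊆⟩. -/
def IsSClosureSys [CompleteResiduatedLattice L] (S : Set (OpPair L Y))
    (𝒮 : Set (Y → L)) : Prop :=
  (∀ T ⊆ 𝒮, sInf T ∈ 𝒮) ∧ (∀ p ∈ S, ∀ M ∈ 𝒮, p.2 M ∈ 𝒮)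

/-- c_𝒮(A) = ⋂{B ∈ 𝒮 : A ⊆ B}. -/
def clSys [CompleteResiduatedLattice L] (𝒮 : Set (Y → L)) (A : Y → L) : Y → L :=
  sInf {B | B ∈ 𝒮 ∧ A ≤ B}

/-- I ⊨^S A ⇒ B for an L-context ⟨X,Y,I⟩ (with I curried, I x = I_x). -/
def CtxSat [CompleteResiduatedLattice L] (S : Set (OpPair L Y)) (I : X → Y → L)
    (φ : FAI L Y) : Prop :=
  ∀ x, Sat S (I x) φ

/-- S_g : the set of upper adjoints occurring in S. -/
def Sg [CompleteResiduatedLattice L] (S : Set (OpPair L Y)) : Set ((Y → L) → (Y → L)) :=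
  {g | ∃ f, (f, g) ∈ S}

/-- F^↑ = ⋂{g(I_x) : ⟨x,g⟩ ∈ F}. -/
def upOp [CompleteResiduatedLattice L] (I : X → Y → L)
    (F : Set (X × ((Y → L) → (Y → L)))) : Y → L :=
  ⨅ xg ∈ F, xg.2 (I xg.1)

/-- G^↓ = {⟨x,g⟩ ∈ X × S_g : G ⊆ g(I_x)}. -/
def downOp [CompleteResiduatedLattice L] (S : Set (OpPair L Y)) (I : X → Y → L)
    (G : Y → L) : Set (X × ((Y → L) → (Y → L))) :=
  {xg | xg.2 ∈ Sg S ∧ G ≤ xg.2 (I xg.1)}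

/-- G^{↓↑} = ⋂{g(I_x) : x ∈ X, ⟨f,g⟩ ∈ S, G ⊆ g(I_x)}. -/
def dnup [CompleteResiduatedLattice L] (S : Set (OpPair L Y)) (I : X → Y → L)
    (G : Y → L) : Y → L :=
  upOp I (downOp S I G)

/-- Σ is S-complete in ⟨X,Y,I⟩. -/
def SComplete [CompleteResiduatedLattice L] (S : Set (OpPair L Y)) (Th : Set (FAI L Y))
    (I : X → Y → L) : Prop :=
  ∀ A B : Y → L, Entails S Th (A, B) ↔ CtxSat S I (A, B)

/-- Σ is an S-base of ⟨X,Y,I⟩. -/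
def SBase [CompleteResiduatedLattice L] (S : Set (OpPair L Y)) (Th : Set (FAI L Y))
    (I : X → Y → L) : Prop :=
  SComplete S Th I ∧ ∀ Th' ⊂ Th, ¬ SComplete S Th' I

/-- S-provability: axioms A∪B ⇒ A, assumptions from Th, rule (Cut) and rule (F). -/
inductive ProvS [CompleteResiduatedLattice L] (S : Set (OpPair L Y)) (Th : Set (FAI L Y)) :
    FAI L Y → Prop
  | ax (A B : Y → L) : ProvS S Th (A ⊔ B, A)
  | hyp {φ : FAI L Y} (h : φ ∈ Th) : ProvS S Th φ
  | cut {A B C D : Y → L} : ProvS S Th (A, B) → ProvS S Th (B ⊔ C, D) → ProvS S Th (A ⊔ C, D)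
  | mul {A B : Y → L} {p : OpPair L Y} (hp : p ∈ S) : ProvS S Th (A, B) → ProvS S Th (p.1 A, p.1 B)

/-- Provability using the axioms and (Cut) as the only inference rule. -/
inductive ProvCut [CompleteResiduatedLattice L] (Th : Set (FAI L Y)) : FAI L Y → Prop
  | ax (A B : Y → L) : ProvCut Th (A ⊔ B, A)
  | hyp {φ : FAI L Y} (h : φ ∈ Th) : ProvCut Th φ
  | cut {A B C D : Y → L} : ProvCut Th (A, B) → ProvCut Th (B ⊔ C, D) → ProvCut Th (A ⊔ C, D)

/-- Residuum a → b = ⋁{c : a ⊗ c ≤ b}. -/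
def resid [CompleteResiduatedLattice L] (a b : L) : L := sSup {c | a * c ≤ b}

/-- Subsethood degree S(A,B) = ⋀_{y∈Y} (A(y) → B(y)). -/
def subDeg [CompleteResiduatedLattice L] (A B : Y → L) : L := ⨅ y, resid (A y) (B y)

/-- c ⊗ B, pointwise. -/
def scMul [CompleteResiduatedLattice L] (c : L) (B : Y → L) : Y → L := fun y => c * B y

/-- ||A ⇒ B||^S_M = ⋁{c ∈ L : M ⊨^S A ⇒ c ⊗ B}. -/
def truthDeg [CompleteResiduatedLattice L] (S : Set (OpPair L Y)) (M A B : Y → L) : L :=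
  sSup {c | Sat S M (A, scMul c B)}

/-- ||A ⇒ B||^S_Th = ⋀_{M ∈ Mod^S(Th)} ||A ⇒ B||^S_M. -/
def entDeg [CompleteResiduatedLattice L] (S : Set (OpPair L Y)) (Th : Set (FAI L Y))
    (A B : Y → L) : L :=
  ⨅ M ∈ ModS S Th, truthDeg S M A B

/-- Immediate consequence operator t^S_Th. -/
def tOp [CompleteResiduatedLattice L] (S : Set (OpPair L Y)) (Th : Set (FAI L Y))
    (M : Y → L) : Y → L :=
  M ⊔ sSup {N | ∃ φ ∈ Th, ∃ p ∈ S, p.1 φ.1 ≤ M ∧ N = p.1 φ.2}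

/-- S-pseudo-intents, defined by well-founded recursion on ⊊ (L^Y is finite). -/
noncomputable def IsPseudoIntent [CompleteResiduatedLattice L] [Finite L] [Finite Y]
    (dn : (Y → L) → (Y → L)) : (Y → L) → Prop :=
  (wellFounded_lt (α := Y → L)).fix
    (fun P rec => P < dn P ∧ ∀ Q, ∀ h : Q < P, rec Q h → dn Q ≤ P)


section Aux

variable [CompleteResiduatedLattice L]

lemma mul_le_mul_left'' (c : L) {a b : L} (h : a ≤ b) : c * a ≤ c * b := by
  have h2 : c * b = c * sSup {a, b} := by rw [sSup_pair, sup_eq_right.mpr h]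
  rw [h2, CompleteResiduatedLattice.mul_sSup]
  exact le_iSup₂ (f := fun x (_ : x ∈ ({a, b} : Set L)) => c * x) a (Set.mem_insert a {b})

lemma mul_resid_le (a b : L) : a * resid a b ≤ b := by
  rw [resid, CompleteResiduatedLattice.mul_sSup]
  exact iSup₂_le fun c hc => hc

lemma le_resid_iff {a b c : L} : c ≤ resid a b ↔ a * c ≤ b := by
  constructor
  · intro h
    exact le_trans (mul_le_mul_left'' a h) (mul_resid_le a b)
  · intro h
    exact le_sSup h

lemma subDeg_le_iff {B M : Y → L} {c : L} : c ≤ subDeg B M ↔ scMul c B ≤ M := by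
  rw [subDeg, le_iInf_iff]
  constructor
  · intro h y
    have := le_resid_iff.mp (h y)
    simpa [scMul, mul_comm] using this
  · intro h y
    refine le_resid_iff.mpr ?_
    have := h y
    simpa [scMul, mul_comm] using this

variable {S : Set (OpPair L Y)} {Th : Set (FAI L Y)}

lemma sInf_mem_ModS {T : Set (Y → L)} (hT : T ⊆ ModS S Th) : sInf T ∈ ModS S Th := by
  intro φ hφ p hp h1
  refine le_sInf fun M hM => ?_
  exact hT hM φ hφ p hp (le_trans h1 (sInf_le hM))

lemma clS_mem {A : Y → L} : clS S Th A ∈ ModS S Th :=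
  sInf_mem_ModS fun M hM => hM.1

lemma le_clS {A : Y → L} : A ≤ clS S Th A :=
  le_sInf fun M hM => hM.2

lemma clS_le {A M : Y → L} (hM : M ∈ ModS S Th) (hAM : A ≤ M) : clS S Th A ≤ M :=
  sInf_le ⟨hM, hAM⟩

lemma g_mem_ModS (hS : IsParam S) {p : OpPair L Y} (hp : p ∈ S) {M : Y → L}
    (hM : M ∈ ModS S Th) : p.2 M ∈ ModS S Th := by
  intro φ hφ q hq h1
  have hpq := hS.2.2 p hp q hq
  have h1' : (p.1 ∘ q.1) φ.1 ≤ M := (hS.1 p hp _ _).mpr h1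
  have h2' : (p.1 ∘ q.1) φ.2 ≤ M := hM φ hφ _ hpq h1'
  exact (hS.1 p hp _ _).mp h2'

lemma sat_mono_c (hS : IsParam S) {M A B : Y → L} {c c' : L} (hcc : c ≤ c')
    (h : Sat S M (A, scMul c' B)) : Sat S M (A, scMul c B) := by
  intro p hp h1
  refine (hS.1 p hp _ _).mpr ?_
  have h2 : scMul c' B ≤ p.2 M := (hS.1 p hp _ _).mp (h p hp h1)
  refine le_trans (fun y => ?_) h2
  show c * B y ≤ c' * B y
  rw [mul_comm c, mul_comm c']
  exact mul_le_mul_left'' (B y) hcc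

lemma truthDeg_sat (hS : IsParam S) {M A B : Y → L} :
    Sat S M (A, scMul (truthDeg S M A B) B) := by
  intro p hp h1
  refine (hS.1 p hp _ _).mpr ?_
  intro y
  show truthDeg S M A B * B y ≤ p.2 M y
  rw [mul_comm, truthDeg, CompleteResiduatedLattice.mul_sSup]
  refine iSup₂_le fun c hc => ?_
  have h2 : scMul c B ≤ p.2 M := (hS.1 p hp _ _).mp (hc p hp h1)
  simpa [scMul, mul_comm] using h2 y

end Aux

/-- the degree of semantic entailment equals the supremum of degrees c
with Σ ⊨^S A ⇒ c ⊗ B, and equals the subsethood degree of B in the least model [A]^S_Σ. -/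
theorem entDeg_eq_sSup_eq_subDeg
    {L Y : Type*} [CompleteResiduatedLattice L] [Nonempty Y]
    (S : Set (OpPair L Y)) (hS : IsParam S)
    (Th : Set (FAI L Y)) (A B : Y → L) :
    entDeg S Th A B = sSup {c : L | Entails S Th (A, scMul c B)} ∧
    entDeg S Th A B = subDeg B (clS S Th A) := by
  have hsat_of_ent : ∀ {c : L}, Entails S Th (A, scMul c B) →
      ∀ M ∈ ModS S Th, Sat S M (A, scMul c B) := by
    intro c hc M hM
    exact hc hM _ rfl
  constructor
  · apply le_antisymm
    · refine le_sSup ?_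
      show Entails S Th (A, scMul (entDeg S Th A B) B)
      intro M hM φ hφ
      rw [Set.mem_singleton_iff] at hφ
      subst hφ
      have h1 : entDeg S Th A B ≤ truthDeg S M A B := iInf₂_le M hM
      exact sat_mono_c hS h1 (truthDeg_sat hS)
    · refine sSup_le fun c hc => le_iInf₂ fun M hM => ?_
      exact le_sSup (hsat_of_ent hc M hM)
  · apply le_antisymm
    · refine le_trans (iInf₂_le (clS S Th A) clS_mem) ?_
      refine sSup_le fun c hc => ?_
      refine subDeg_le_iff.mpr ?_
      have := hc (id, id) hS.2.1 le_clS
      simpa using this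
    · set c := subDeg B (clS S Th A) with hc
      have hcB : scMul c B ≤ clS S Th A := subDeg_le_iff.mp le_rfl
      refine le_iInf₂ fun M hM => le_sSup ?_
      intro p hp h1
      have hA : A ≤ p.2 M := (hS.1 p hp _ _).mp h1
      have hM2 : p.2 M ∈ ModS S Th := g_mem_ModS hS hp hM
      have h2 : clS S Th A ≤ p.2 M := clS_le hM2 hA
      exact (hS.1 p hp _ _).mpr (le_trans hcB h2)

end FAIparam
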